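/- Let (X, d) be a separable metric space, μ a Borel probability measure on X, and u ∈ supp(μ). For every null sequence (Δ_n) of positive reals there exist null sequences (r̃_n) and (ε_n) of positive reals such that for all n, μ(B(u, r̃_n + Δ_n)) ≤ (1 + ε_n) μ(B(u, r̃_n)). -/

import Mathlib

open MeasureTheory Metric Filter Topology

theorem stmt5 {X : Type*} [MetricSpace X] [TopologicalSpace.SeparableSpace X]
    [MeasurableSpace X] [BorelSpace X] (μ : Measure X) [IsProbabilityMeasure μ]
    (u : X) (hu : ∀ r : ℝ, 0 < r → 0 < μ (ball u r))
    (Δ : ℕ → ℝ) (hΔpos : ∀ n, 0 < Δ n) (hΔ : Tendsto Δ atTop (𝓝 0)) :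
    ∃ r ε : ℕ → ℝ, (∀ n, 0 < r n) ∧ Tendsto r atTop (𝓝 0) ∧
      (∀ n, 0 < ε n) ∧ Tendsto ε atTop (𝓝 0) ∧
      ∀ n, μ (ball u (r n + Δ n)) ≤ ENNReal.ofReal (1 + ε n) * μ (ball u (r n)) := by
  have _ : SecondCountableTopology X := UniformSpace.secondCountable_of_separable X
  -- Step 1: radii with null spheres
  have hcount : Set.Countable {t : ℝ | 0 < μ {a : X | dist a u = t}} :=
    Measure.countable_meas_level_set_pos (measurable_dist.comp
      (measurable_id.prodMk measurable_const))
  have hρ : ∀ m : ℕ, ∃ p : ℝ, (p ∈ Set.Ioo (0:ℝ) (1/(m+1))) ∧ μ (sphere u p) = 0 := by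
    intro m
    have aux := measure_diff_null (s := Set.Ioo (0:ℝ) (1/(m+1)))
      (hcount.measure_zero volume)
    have len_pos : 0 < volume (Set.Ioo (0:ℝ) (1/(m+1)) \ {t : ℝ | 0 < μ {a : X | dist a u = t}}) := by
      rw [aux, Real.volume_Ioo]
      simp only [ENNReal.ofReal_pos, sub_zero]
      positivity
    rcases nonempty_of_measure_ne_zero len_pos.ne' with ⟨p, hp, hp2⟩
    refine ⟨p, hp, ?_⟩
    simp only [Set.mem_setOf_eq, not_lt, le_zero_iff] at hp2
    exact hp2
  choose ρ hρIoo hρnull using hρ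
  -- ball measure positive facts
  have hballpos : ∀ m, 0 < μ (ball u (ρ m)) := fun m => hu _ (hρIoo m).1
  have hballne : ∀ m, μ (ball u (ρ m)) ≠ ⊤ := fun m => measure_ne_top μ _
  have hcb : ∀ m, μ (closedBall u (ρ m)) = μ (ball u (ρ m)) := by
    intro m
    rw [← ball_union_sphere]
    refine le_antisymm ?_ (measure_mono Set.subset_union_left)
    calc μ (ball u (ρ m) ∪ sphere u (ρ m)) ≤ μ (ball u (ρ m)) + μ (sphere u (ρ m)) :=
      measure_union_le _ _
    _ = μ (ball u (ρ m)) := by rw [hρnull m, add_zero]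
  -- Step 2: eventual inequality
  have key : ∀ m : ℕ, ∀ᶠ n in atTop,
      μ (ball u (ρ m + Δ n)) ≤ ENNReal.ofReal (1 + 1/(m+1)) * μ (ball u (ρ m)) := by
    intro m
    set c := μ (ball u (ρ m)) with hc
    have hlt : c < ENNReal.ofReal (1 + 1/(m+1)) * c := by
      nth_rewrite 1 [← one_mul c]
      apply ENNReal.mul_lt_mul_iff_left (hballpos m).ne' (hballne m) |>.mpr
      rw [← ENNReal.ofReal_one]
      apply ENNReal.ofReal_lt_ofReal_iff_of_nonneg zero_le_one |>.mpr
      have : (0:ℝ) < 1/(m+1) := by positivity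
      linarith
    -- decreasing balls → closedBall
    have hiInter : (⋂ k : ℕ, ball u (ρ m + 1/(k+1))) = closedBall u (ρ m) := by
      ext x
      simp only [Set.mem_iInter, mem_ball, mem_closedBall]
      constructor
      · intro h
        by_contra hx
        push_neg at hx
        obtain ⟨k, hk⟩ := exists_nat_gt (1 / (dist x u - ρ m))
        have hd : 0 < dist x u - ρ m := by linarith
        have h1 : 1 / (dist x u - ρ m) < k + 1 := by linarith
        have : 1 / ((k:ℝ)+1) < dist x u - ρ m := by
          rw [div_lt_iff₀ (by positivity)] at h1 ⊢
          · nlinarith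
        have := h k
        linarith
      · intro h k
        have : (0:ℝ) < 1/((k:ℝ)+1) := by positivity
        linarith
    have htendsto : Tendsto (fun k : ℕ => μ (ball u (ρ m + 1/(k+1)))) atTop (𝓝 c) := by
      have := tendsto_measure_iInter_atTop (μ := μ)
        (s := fun k : ℕ => ball u (ρ m + 1/(k+1)))
        (fun k => measurableSet_ball.nullMeasurableSet)
        (fun i j hij => ball_subset_ball (by
          have : 1/((j:ℝ)+1) ≤ 1/((i:ℝ)+1) := by
            apply one_div_le_one_div_of_le (by positivity)
            exact_mod_cast by omega
          linarith)) ⟨0, measure_ne_top μ _⟩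
      rwa [hiInter, hcb m] at this
    obtain ⟨k, hk⟩ := (htendsto.eventually_lt_const hlt).exists
    have hev : ∀ᶠ n in atTop, Δ n < 1/((k:ℝ)+1) :=
      hΔ.eventually (gt_mem_nhds (by positivity))
    filter_upwards [hev] with n hn
    calc μ (ball u (ρ m + Δ n)) ≤ μ (ball u (ρ m + 1/(k+1))) :=
          measure_mono (ball_subset_ball (by linarith))
      _ ≤ ENNReal.ofReal (1 + 1/(m+1)) * c := hk.le
  -- Step 3: extract thresholds, diagonalize
  have key' : ∀ m : ℕ, ∃ N : ℕ, ∀ n ≥ N,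
      μ (ball u (ρ m + Δ n)) ≤ ENNReal.ofReal (1 + 1/(m+1)) * μ (ball u (ρ m)) := by
    intro m
    exact (eventually_atTop.mp (key m))
  choose N hN using key'
  set M : ℕ → ℕ := fun m => m + (Finset.range (m+1)).sup N with hM
  have hMm : ∀ m, m ≤ M m := fun m => Nat.le_add_right _ _
  have hMN : ∀ m, N m ≤ M m := fun m => le_add_of_le_right
    (Finset.le_sup (Finset.self_mem_range_succ m))
  set φ : ℕ → ℕ := fun n => Nat.findGreatest (fun m => M m ≤ n) n with hφ
  have hφ_big : ∀ m n, M m ≤ n → m ≤ φ n := by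
    intro m n h
    exact Nat.le_findGreatest (le_trans (hMm m) h) h
  have hφ_spec : ∀ n, M 0 ≤ n → M (φ n) ≤ n := by
    intro n h
    exact Nat.findGreatest_spec (P := fun m => M m ≤ n) (Nat.zero_le n) h
  have hφtop : Tendsto φ atTop atTop := by
    apply tendsto_atTop_atTop.mpr
    intro m
    exact ⟨M m, fun n hn => hφ_big m n hn⟩
  -- fallback constant
  set c₁ := μ (ball u 1) with hc₁
  have hc₁pos : 0 < c₁ := hu 1 one_pos
  have hc₁ne : c₁ ≠ ⊤ := measure_ne_top μ _
  have hc₁t : 0 < c₁.toReal := ENNReal.toReal_pos hc₁pos.ne' hc₁ne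
  refine ⟨fun n => if M 0 ≤ n then ρ (φ n) else 1,
          fun n => if M 0 ≤ n then 1/(φ n + 1) else c₁.toReal⁻¹, ?_, ?_, ?_, ?_, ?_⟩
  · intro n
    by_cases h : M 0 ≤ n <;> simp [h]
    exact (hρIoo (φ n)).1
  · -- r → 0
    have hb : Tendsto (fun n => 1/((φ n:ℝ)+1)) atTop (𝓝 0) :=
      tendsto_one_div_add_atTop_nhds_zero_nat.comp hφtop
    apply squeeze_zero' (g := fun n => 1/((φ n:ℝ)+1)) ?_ ?_ hb
    · filter_upwards [eventually_ge_atTop (M 0)] with n hn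
      simp [hn]
      exact (hρIoo (φ n)).1.le
    · filter_upwards [eventually_ge_atTop (M 0)] with n hn
      simp only [hn, if_pos]
      exact (hρIoo (φ n)).2.le
  · intro n
    by_cases h : M 0 ≤ n
    · simp only [h, if_pos]
      positivity
    · simp only [h, if_neg, not_false_iff]
      positivity
  · -- ε → 0
    have hb : Tendsto (fun n => 1/((φ n:ℝ)+1)) atTop (𝓝 0) :=
      tendsto_one_div_add_atTop_nhds_zero_nat.comp hφtop
    apply hb.congr'
    filter_upwards [eventually_ge_atTop (M 0)] with n hn
    simp [hn]
  · intro n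
    by_cases h : M 0 ≤ n
    · simp only [h, if_pos]
      have h1 : N (φ n) ≤ n := le_trans (hMN (φ n)) (hφ_spec n h)
      have := hN (φ n) n h1
      convert this using 3
    · simp only [h, if_neg, not_false_iff]
      calc μ (ball u (1 + Δ n)) ≤ 1 := prob_le_one
        _ = c₁⁻¹ * c₁ := (ENNReal.inv_mul_cancel hc₁pos.ne' hc₁ne).symm
        _ ≤ ENNReal.ofReal (1 + c₁.toReal⁻¹) * c₁ := by
            apply mul_le_mul_left
            have hinv : c₁⁻¹ = ENNReal.ofReal (c₁.toReal⁻¹) := by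
              rw [ENNReal.ofReal_inv_of_pos hc₁t, ENNReal.ofReal_toReal hc₁ne]
            rw [hinv]
            exact ENNReal.ofReal_le_ofReal (by linarith)
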